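/- Let d = mJ with m > 1, let W ⊂ ℤ_m, and let Ω = ∪_{r∈W} (mℤ_d + r) ⊂ ℤ_d. If there exists a circular convolution operator A ∈ ℬ_L such that Y = {e_i, A e_i, …, A^{m−1} e_i : i ∈ Ω} is a frame for ℓ²(ℤ_d), then |W| ≥ L. More generally, if Ω is an admissible set for some A ∈ ℬ_L (i.e., there exist nonnegative integers l_i, i ∈ Ω, making {e_i, A e_i, …, A^{l_i} e_i : i ∈ Ω} a frame), then |W| ≥ L. -/

import Mathlib

open Matrix

/-- Unnormalized discrete Fourier transform of `a : ZMod d → ℂ`. -/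
noncomputable def hatKer (d : ℕ) [NeZero d] (a : ZMod d → ℂ) : ZMod d → ℂ :=
  fun j => ∑ k : ZMod d,
    a k * Complex.exp (-(2 * (Real.pi : ℂ) * Complex.I) * ((j.val : ℂ) * (k.val : ℂ)) / (d : ℂ))

/-- The circular convolution operator with kernel `a`, as a matrix. -/
def convMat (d : ℕ) (a : ZMod d → ℂ) : Matrix (ZMod d) (ZMod d) ℂ :=
  Matrix.of fun k i => a (k - i)

/-- The normalized discrete Fourier matrix `F_d`. -/
noncomputable def FdMat (d : ℕ) : Matrix (ZMod d) (ZMod d) ℂ :=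
  Matrix.of fun j k =>
    ((Real.sqrt d : ℝ) : ℂ)⁻¹ *
      Complex.exp (-(2 * (Real.pi : ℂ) * Complex.I) * ((j.val : ℂ) * (k.val : ℂ)) / (d : ℂ))

/-- With `d = mJ` and `a_k = (â(k), â(k+J), …, â(k+(m-1)J))`, this is
`max_{k<J} M_{D_k}`, the largest number of equal entries among the `a_k`'s. -/
noncomputable def maxMultB (d m J : ℕ) [NeZero d] (b : ZMod d → ℂ) : ℕ :=
  (Finset.range J).sup fun k =>
    (Finset.range m).sup fun t =>
      Nat.card {s : ℕ | s < m ∧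
        b (((k + s * J : ℕ) : ZMod d)) = b (((k + t * J : ℕ) : ZMod d))}

section Aux

open Matrix

noncomputable def zet (d : ℕ) : ℂ := Complex.exp (-(2 * (Real.pi : ℂ) * Complex.I) / d)

lemma zet_pow_d (d : ℕ) [NeZero d] : zet d ^ d = 1 := by
  rw [zet, ← Complex.exp_nat_mul]
  have hd : (d : ℂ) ≠ 0 := Nat.cast_ne_zero.mpr (NeZero.ne d)
  rw [show (d : ℂ) * (-(2 * (Real.pi : ℂ) * Complex.I) / d) = -(2 * Real.pi * Complex.I) by
    field_simp]
  rw [show -(2 * (Real.pi:ℂ) * Complex.I) = (-1 : ℤ) * (2 * Real.pi * Complex.I) by ring]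
  exact Complex.exp_int_mul_two_pi_mul_I (-1)

lemma zet_pow_mod (d : ℕ) [NeZero d] (p : ℕ) : zet d ^ p = zet d ^ (p % d) := by
  conv_lhs => rw [← Nat.div_add_mod p d]
  rw [pow_add, pow_mul, zet_pow_d, one_pow, one_mul]

lemma zet_pow_congr (d : ℕ) [NeZero d] {p q : ℕ} (h : p % d = q % d) :
    zet d ^ p = zet d ^ q := by
  rw [zet_pow_mod d p, zet_pow_mod d q, h]

lemma zet_pow_val_ne_one (d : ℕ) [NeZero d] (j : ZMod d) (hj : j ≠ 0) :
    zet d ^ j.val ≠ 1 := by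
  have hd : (d : ℂ) ≠ 0 := Nat.cast_ne_zero.mpr (NeZero.ne d)
  have hπ : (2 * (Real.pi : ℂ) * Complex.I) ≠ 0 := by
    simp [Real.pi_ne_zero, Complex.I_ne_zero, Complex.ofReal_ne_zero]
  rw [zet, ← Complex.exp_nat_mul]
  intro h
  rw [Complex.exp_eq_one_iff] at h
  obtain ⟨n, hn⟩ := h
  have key : ((j.val : ℂ) + n * d) * (2 * (Real.pi:ℂ) * Complex.I) = 0 := by
    rw [show ((j.val : ℂ)) = ((j.cast : ℂ)) from ZMod.natCast_val j]
    field_simp at hn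
    have hjc : ((j.val : ℂ)) = ((j.cast : ℂ)) := ZMod.natCast_val j
    linear_combination (-(2 * (Real.pi:ℂ) * Complex.I)) * hn - (2 * (Real.pi:ℂ) * Complex.I) * hjc
  have h2 : ((j.val : ℂ) + n * d) = 0 := by
    rcases mul_eq_zero.mp key with h | h
    · exact h
    · exact absurd h hπ
  have h3 : ((j.val : ℤ) + n * d) = 0 := by
    exact_mod_cast (by push_cast at h2 ⊢; exact_mod_cast h2 : ((j.val : ℤ) + n * d : ℂ) = 0)
  have hv : 0 < j.val := Nat.pos_of_ne_zero (fun h0 => hj ((ZMod.val_eq_zero j).mp h0))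
  have hvd : j.val < d := ZMod.val_lt j
  have : (d : ℤ) ∣ (j.val : ℤ) := ⟨-n, by linarith⟩
  have := Int.le_of_dvd (by exact_mod_cast hv) this
  omega

lemma sum_zet (d : ℕ) [NeZero d] (j : ZMod d) :
    ∑ i : ZMod d, zet d ^ (j.val * i.val) = if j = 0 then (d : ℂ) else 0 := by
  have hre : ∑ i : ZMod d, (zet d ^ j.val) ^ i.val = ∑ n ∈ Finset.range d, (zet d ^ j.val) ^ n := by
    refine Finset.sum_nbij' (fun i => i.val) (fun n => (n : ZMod d)) ?_ ?_ ?_ ?_ ?_ <;>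
      first
      | (intro i _; exact Finset.mem_range.mpr (ZMod.val_lt i))
      | (intro n _; exact Finset.mem_univ _)
      | (intro n hn; exact ZMod.val_cast_of_lt (Finset.mem_range.mp hn))
      | (intro i _; simp [ZMod.natCast_val, ZMod.cast_id])
  have hsum : ∑ i : ZMod d, zet d ^ (j.val * i.val) = ∑ n ∈ Finset.range d, (zet d ^ j.val) ^ n := by
    rw [← hre]; congr 1; ext i; rw [← pow_mul]
  rw [hsum]
  by_cases hj : j = 0
  · simp [hj, ZMod.val_zero]
  · rw [if_neg hj, geom_sum_eq (zet_pow_val_ne_one d j hj), ← pow_mul, mul_comm, pow_mul,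
      zet_pow_d, one_pow, sub_self, zero_div]

lemma sum_zet_orth (d : ℕ) [NeZero d] (p q : ZMod d) :
    ∑ i : ZMod d, zet d ^ (p.val * i.val) * zet d ^ (q.val * i.val)
      = if p + q = 0 then (d : ℂ) else 0 := by
  have h : ∀ i : ZMod d, zet d ^ (p.val * i.val) * zet d ^ (q.val * i.val)
      = zet d ^ ((p + q).val * i.val) := by
    intro i
    rw [← pow_add, ← add_mul]
    apply zet_pow_congr
    have h1 : (p.val + q.val) % d = (p + q).val % d := by
      rw [ZMod.val_add]; exact (Nat.mod_mod_of_dvd _ dvd_rfl).symm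
    exact (Nat.ModEq.mul_right i.val h1)
  simp_rw [h]
  exact sum_zet d (p + q)

noncomputable def hatF (d : ℕ) [NeZero d] (j : ZMod d) (v : ZMod d → ℂ) : ℂ :=
  ∑ i : ZMod d, v i * zet d ^ (j.val * i.val)

lemma zet_pow_eq_exp (d : ℕ) [NeZero d] (p q : ℕ) :
    zet d ^ (p * q) =
      Complex.exp (-(2 * (Real.pi : ℂ) * Complex.I) * ((p : ℂ) * (q : ℂ)) / (d : ℂ)) := by
  rw [zet, ← Complex.exp_nat_mul]
  congr 1
  push_cast
  ring

lemma hatKer_eq (d : ℕ) [NeZero d] (a : ZMod d → ℂ) (j : ZMod d) :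
    hatKer d a j = ∑ k : ZMod d, a k * zet d ^ (j.val * k.val) := by
  unfold hatKer
  congr 1; ext k
  rw [zet_pow_eq_exp]

lemma zet_mul_val (d : ℕ) [NeZero d] (j : ZMod d) (y i : ZMod d) :
    zet d ^ (j.val * (y + i).val) = zet d ^ (j.val * y.val) * zet d ^ (j.val * i.val) := by
  rw [← pow_add, ← Nat.mul_add]
  apply zet_pow_congr
  have h1 : (y.val + i.val) % d = (y + i).val % d := by
    rw [ZMod.val_add]; exact (Nat.mod_mod_of_dvd _ dvd_rfl).symm
  exact (Nat.ModEq.mul_left j.val h1).symm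

lemma hatF_single (d : ℕ) [NeZero d] (j : ZMod d) (i : ZMod d) :
    hatF d j (Pi.single i 1) = zet d ^ (j.val * i.val) := by
  unfold hatF
  rw [Finset.sum_eq_single i]
  · simp
  · intro b _ hb; simp [Pi.single_apply, hb]
  · simp

lemma hatF_conv (d : ℕ) [NeZero d] (a : ZMod d → ℂ) (j : ZMod d) (v : ZMod d → ℂ) :
    hatF d j (convMat d a *ᵥ v) = hatKer d a j * hatF d j v := by
  unfold hatF convMat
  rw [hatKer_eq]
  simp only [mulVec, dotProduct, of_apply]
  calc ∑ x : ZMod d, (∑ i : ZMod d, a (x - i) * v i) * zet d ^ (j.val * x.val)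
      = ∑ i : ZMod d, ∑ x : ZMod d, a (x - i) * v i * zet d ^ (j.val * x.val) := by
        rw [Finset.sum_comm]; congr 1; ext x; rw [Finset.sum_mul]
    _ = ∑ i : ZMod d, ∑ y : ZMod d, a y * v i * zet d ^ (j.val * (y + i).val) := by
        congr 1; ext i
        exact Fintype.sum_equiv (Equiv.subRight i) _ _ (by intro x; simp)
    _ = (∑ y : ZMod d, a y * zet d ^ (j.val * y.val)) * ∑ i : ZMod d, v i * zet d ^ (j.val * i.val) := by
        rw [Finset.sum_mul_sum, Finset.sum_comm]
        congr 1; ext i; congr 1; ext y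
        rw [zet_mul_val]
        ring

lemma hatF_pow (d : ℕ) [NeZero d] (a : ZMod d → ℂ) (j : ZMod d) (v : ZMod d → ℂ) (n : ℕ) :
    hatF d j ((convMat d a) ^ n *ᵥ v) = (hatKer d a j) ^ n * hatF d j v := by
  induction n with
  | zero => simp [Matrix.one_mulVec]
  | succ n ih =>
      rw [pow_succ', pow_succ', ← Matrix.mulVec_mulVec, hatF_conv, ih]
      ring

end Aux


lemma stmt9_main (d m J L : ℕ) [NeZero d] [NeZero m] (hm : 1 < m) (hd : d = m * J)
    (W : Finset (ZMod m)) (a : ZMod d → ℂ) (hL : maxMultB d m J (hatKer d a) = L)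
    (l : ZMod d → ℕ)
    (hspan : Submodule.span ℂ {v : ZMod d → ℂ | ∃ i : ZMod d, ((i.val : ZMod m) ∈ W) ∧
        ∃ n ≤ l i, v = (convMat d a) ^ n *ᵥ (Pi.single i 1 : ZMod d → ℂ)} = ⊤) :
    L ≤ W.card := by
  have hJ : J ≠ 0 := fun h => NeZero.ne d (by simp [hd, h])
  have hm0 : 0 < m := lt_trans one_pos hm
  have hd0 : (d : ℂ) ≠ 0 := Nat.cast_ne_zero.mpr (NeZero.ne d)
  set b := hatKer d a with hb
  obtain ⟨k, hkmem, hk⟩ := Finset.exists_mem_eq_sup (Finset.range J)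
    ⟨0, Finset.mem_range.mpr (Nat.pos_of_ne_zero hJ)⟩
    (fun k => (Finset.range m).sup fun t => Nat.card {s : ℕ | s < m ∧
        b (((k + s * J : ℕ) : ZMod d)) = b (((k + t * J : ℕ) : ZMod d))})
  obtain ⟨t, htmem, ht⟩ := Finset.exists_mem_eq_sup (Finset.range m)
    ⟨0, Finset.mem_range.mpr hm0⟩
    (fun t => Nat.card {s : ℕ | s < m ∧
        b (((k + s * J : ℕ) : ZMod d)) = b (((k + t * J : ℕ) : ZMod d))})
  have hkJ : k < J := Finset.mem_range.mp hkmem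
  have hLc : Nat.card {s : ℕ | s < m ∧
      b (((k + s * J : ℕ) : ZMod d)) = b (((k + t * J : ℕ) : ZMod d))} = L := by
    rw [← hL]
    unfold maxMultB
    rw [hk, ht]
  set S : Finset ℕ := (Finset.range m).filter
    (fun s => b (((k + s * J : ℕ) : ZMod d)) = b (((k + t * J : ℕ) : ZMod d))) with hS
  have hSL : S.card = L := by
    rw [← hLc]
    have hset : {s : ℕ | s < m ∧
        b (((k + s * J : ℕ) : ZMod d)) = b (((k + t * J : ℕ) : ZMod d))} = (S : Set ℕ) := by
      ext s; simp [hS, Finset.mem_filter, Finset.mem_range]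
    rw [hset, Nat.card_coe_set_eq, Set.ncard_coe_finset]
  set lam := b (((k + t * J : ℕ) : ZMod d)) with hlam
  have hval : ∀ s, s < m → (((k + s * J : ℕ) : ZMod d)).val = k + s * J := by
    intro s hs
    apply ZMod.val_cast_of_lt
    calc k + s * J < J + s * J := by omega
      _ = (s + 1) * J := by ring
      _ ≤ m * J := Nat.mul_le_mul_right J hs
      _ = d := hd.symm
  have hjinj : ∀ s s', s < m → s' < m →
      (((k + s * J : ℕ) : ZMod d)) = (((k + s' * J : ℕ) : ZMod d)) → s = s' := by
    intro s s' hs hs' h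
    have h2 := congrArg ZMod.val h
    rw [hval s hs, hval s' hs'] at h2
    have hJ0 : 0 < J := Nat.pos_of_ne_zero hJ
    have h3 : s * J = s' * J := by omega
    exact Nat.eq_of_mul_eq_mul_right hJ0 h3
  have hSm : ∀ s : ↥S, (s : ℕ) < m := fun s =>
    Finset.mem_range.mp (Finset.mem_filter.mp s.2).1
  have hSlam : ∀ s : ↥S, b (((k + (s : ℕ) * J : ℕ) : ZMod d)) = lam := fun s =>
    (Finset.mem_filter.mp s.2).2
  -- the linear map
  set T : (ZMod d → ℂ) →ₗ[ℂ] (↥S → ℂ) :=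
    (Matrix.of fun (s : ↥S) (i : ZMod d) =>
      zet d ^ ((((k + (s : ℕ) * J : ℕ) : ZMod d)).val * i.val)).mulVecLin with hTdef
  have hT : ∀ v (s : ↥S), T v s = hatF d (((k + (s : ℕ) * J : ℕ) : ZMod d)) v := by
    intro v s
    simp [hTdef, Matrix.mulVecLin_apply, Matrix.mulVec, dotProduct, hatF, mul_comm]
  -- surjectivity
  have hTsurj : Function.Surjective T := by
    have hw : ∀ s0 : ↥S, ∃ w, T w = Pi.single s0 1 := by
      intro s0
      refine ⟨fun i => (d : ℂ)⁻¹ *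
        zet d ^ ((-(((k + (s0 : ℕ) * J : ℕ) : ZMod d))).val * i.val), ?_⟩
      funext s
      rw [hT]
      unfold hatF
      have hre : ∀ i : ZMod d,
          ((d : ℂ)⁻¹ * zet d ^ ((-(((k + (s0 : ℕ) * J : ℕ) : ZMod d))).val * i.val)) *
            zet d ^ ((((k + (s : ℕ) * J : ℕ) : ZMod d)).val * i.val)
          = (d : ℂ)⁻¹ * (zet d ^ ((-(((k + (s0 : ℕ) * J : ℕ) : ZMod d))).val * i.val) *
              zet d ^ ((((k + (s : ℕ) * J : ℕ) : ZMod d)).val * i.val)) := fun i => by ring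
      simp_rw [hre]
      rw [← Finset.mul_sum, sum_zet_orth]
      by_cases hss : s = s0
      · subst hss
        rw [if_pos (neg_add_cancel _), Pi.single_eq_same, inv_mul_cancel₀ hd0]
      · rw [if_neg, Pi.single_eq_of_ne hss, mul_zero]
        intro hcon
        apply hss
        apply Subtype.ext
        apply hjinj _ _ (hSm s) (hSm s0)
        exact (neg_add_eq_zero.mp hcon).symm
    intro c
    choose w hw2 using hw
    refine ⟨∑ s0 : ↥S, c s0 • w s0, ?_⟩
    rw [map_sum]
    simp_rw [_root_.map_smul, hw2]
    funext s
    simp [Pi.single_apply]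
  -- span image
  have h1 : Submodule.span ℂ
      (T '' {v : ZMod d → ℂ | ∃ i : ZMod d, ((i.val : ZMod m) ∈ W) ∧
        ∃ n ≤ l i, v = (convMat d a) ^ n *ᵥ (Pi.single i 1 : ZMod d → ℂ)}) = ⊤ := by
    rw [← Submodule.map_span, hspan, Submodule.map_top, LinearMap.range_eq_top.mpr hTsurj]
  set R : Finset ℕ := (Finset.range m).filter (fun r => ((r : ZMod m) ∈ W)) with hR
  set G : Finset (↥S → ℂ) := R.image (fun r => fun s : ↥S => zet d ^ ((s : ℕ) * J * r)) with hG
  have h2 : Submodule.span ℂ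
      (T '' {v : ZMod d → ℂ | ∃ i : ZMod d, ((i.val : ZMod m) ∈ W) ∧
        ∃ n ≤ l i, v = (convMat d a) ^ n *ᵥ (Pi.single i 1 : ZMod d → ℂ)})
      ≤ Submodule.span ℂ (G : Set (↥S → ℂ)) := by
    rw [Submodule.span_le]
    rintro u ⟨v, ⟨i, hiW, n, hn, rfl⟩, rfl⟩
    have hexp : ∀ s : ↥S, T ((convMat d a) ^ n *ᵥ Pi.single i 1) s
        = (lam ^ n * zet d ^ (k * i.val)) * zet d ^ ((s : ℕ) * J * (i.val % m)) := by
      intro s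
      rw [hT, hatF_pow, hatF_single, ← hb, hSlam s]
      have hvv : (((k + (s : ℕ) * J : ℕ) : ZMod d)).val = k + (s : ℕ) * J := hval _ (hSm s)
      rw [hvv]
      have hiv : m * (i.val / m) + i.val % m = i.val := Nat.div_add_mod i.val m
      have hstep : (s : ℕ) * J * i.val
          = (s : ℕ) * J * (i.val % m) + (s : ℕ) * (i.val / m) * d := by
        subst hd
        calc (s : ℕ) * J * i.val = (s : ℕ) * J * (m * (i.val / m) + i.val % m) := by rw [hiv]
          _ = (s : ℕ) * J * (i.val % m) + (s : ℕ) * (i.val / m) * (m * J) := by ring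
      have harith : (k + (s : ℕ) * J) * i.val
          = (k * i.val + (s : ℕ) * J * (i.val % m)) + ((s : ℕ) * (i.val / m)) * d := by
        rw [Nat.add_mul, hstep]; ring
      rw [harith,
        zet_pow_congr d (Nat.add_mul_mod_self_right (k * i.val + (s : ℕ) * J * (i.val % m))
          ((s : ℕ) * (i.val / m)) d), pow_add]
      ring
    have heq : T ((convMat d a) ^ n *ᵥ Pi.single i 1)
        = (lam ^ n * zet d ^ (k * i.val)) •
          (fun s : ↥S => zet d ^ ((s : ℕ) * J * (i.val % m))) := by
      funext s; rw [hexp s]; simp [smul_eq_mul]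
    rw [heq]
    apply Submodule.smul_mem
    apply Submodule.subset_span
    refine Finset.mem_coe.mpr (Finset.mem_image.mpr ⟨i.val % m, ?_, rfl⟩)
    rw [hR, Finset.mem_filter, Finset.mem_range]
    exact ⟨Nat.mod_lt _ hm0, by rw [ZMod.natCast_mod]; exact hiW⟩
  have hGtop : Submodule.span ℂ (G : Set (↥S → ℂ)) = ⊤ := eq_top_iff.mpr (h1 ▸ h2)
  have hfin : L ≤ G.card := by
    have h3 := finrank_span_finset_le_card (R := ℂ) G
    rw [Set.finrank] at h3
    rw [hGtop, finrank_top, Module.finrank_fintype_fun_eq_card, Fintype.card_coe, hSL] at h3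
    exact h3
  have hRW : R.card ≤ W.card := by
    have hinj : Set.InjOn (fun r : ℕ => (r : ZMod m)) R := by
      intro r hr r' hr' hrr
      have h1m : r < m := Finset.mem_range.mp (Finset.mem_filter.mp hr).1
      have h2m : r' < m := Finset.mem_range.mp (Finset.mem_filter.mp hr').1
      have := congrArg ZMod.val hrr
      rwa [ZMod.val_cast_of_lt h1m, ZMod.val_cast_of_lt h2m] at this
    rw [← Finset.card_image_of_injOn hinj]
    apply Finset.card_le_card
    intro x hx
    obtain ⟨r, hr, rfl⟩ := Finset.mem_image.mp hx
    exact (Finset.mem_filter.mp hr).2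
  calc L ≤ G.card := hfin
    _ ≤ R.card := Finset.card_image_le
    _ ≤ W.card := hRW

/-- with `d = mJ`, `m > 1`, `W ⊂ ℤ_m` and `Ω = ∪_{r ∈ W} (mℤ_d + r)`
(i.e. `i ∈ Ω ↔ i mod m ∈ W`): (first part) if `Y = {A^n e_i : i ∈ Ω, n ≤ m - 1}` is a
frame for some `A ∈ ℬ_L`, then `|W| ≥ L`; (second, more general part) if `Ω` is
admissible for some `A ∈ ℬ_L`, i.e. some choice of `l_i` makes
`{A^n e_i : i ∈ Ω, n ≤ l_i}` a frame, then `|W| ≥ L`. -/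
theorem stmt9 (d m J L : ℕ) [NeZero d] [NeZero m] (hm : 1 < m) (hd : d = m * J)
    (W : Finset (ZMod m)) :
    ((∃ a : ZMod d → ℂ, maxMultB d m J (hatKer d a) = L ∧
        Submodule.span ℂ {v : ZMod d → ℂ | ∃ i : ZMod d, ((i.val : ZMod m) ∈ W) ∧
          ∃ n ≤ m - 1, v = (convMat d a) ^ n *ᵥ (Pi.single i 1 : ZMod d → ℂ)} = ⊤)
      → L ≤ W.card) ∧
    ((∃ a : ZMod d → ℂ, maxMultB d m J (hatKer d a) = L ∧
        ∃ l : ZMod d → ℕ,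
          Submodule.span ℂ {v : ZMod d → ℂ | ∃ i : ZMod d, ((i.val : ZMod m) ∈ W) ∧
            ∃ n ≤ l i, v = (convMat d a) ^ n *ᵥ (Pi.single i 1 : ZMod d → ℂ)} = ⊤)
      → L ≤ W.card) := by
  constructor
  · rintro ⟨a, hLa, hsp⟩
    exact stmt9_main d m J L hm hd W a hLa (fun _ => m - 1) hsp
  · rintro ⟨a, hLa, l, hsp⟩
    exact stmt9_main d m J L hm hd W a hLa l hsp
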